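/- With n = 2: for every integer k ≥ 0 and every ℓ ∈ ℕ, the identity (k, ℓ) = Σ_{s=max(1, r−k)}^{r} (−1)^{s−1} A(k,s) · (r−s, ℓ+s+k−r) holds in V_2 (for 1 ≤ s < r−k the coefficient A(k,s) vanishes, since [k ¦ r−s] = 0 when 0 ≤ k < r−s, so the restriction of the summation range loses nothing). -/

import Mathlib

noncomputable section

open Finset

/-- The field `ℚ(q)` of rational functions. -/
abbrev K : Type := RatFunc ℚ

/-- The variable `q`. -/
def q : K := RatFunc.X

/-- The balanced `q`-integer `[n] = (q^n - q^{-n})/(q - q^{-1})`. -/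
def qint (n : ℤ) : K := (q ^ n - q ^ (-n)) / (q - q⁻¹)

/-- The `q`-factorial `[m]! = [1][2]⋯[m]`. -/
def qfact (m : ℕ) : K := ∏ t ∈ Finset.range m, qint (t + 1)

/-- The `q`-binomial coefficient `[n ¦ m] = [n][n-1]⋯[n-m+1]/[m]!`. -/
def qbinom (n : ℤ) (m : ℕ) : K := (∏ t ∈ Finset.range m, qint (n - t)) / qfact m

/-- The tuple `a(i,j)` obtained from `a` by replacing the pair of entries at the
(0-based) positions `i, i+1` by `(a_i − j, a_{i+1} + j)`. -/
def tupleRepl {n : ℕ} (a : Fin n → ℕ) (i : ℕ) (h : i + 1 < n) (j : ℕ) : Fin n → ℕ :=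
  fun t =>
    if t = (⟨i, by omega⟩ : Fin n) then a ⟨i, by omega⟩ - j
    else if t = (⟨i + 1, h⟩ : Fin n) then a ⟨i + 1, h⟩ + j
    else a t

/-- The set of spanning elements of the subspace `R_n` of relations:
`Σ_{j=0}^{r} (−1)^j [r ¦ j] · a(i,j)` for `a ∈ ℕ^n` and a position `i` with `a_i ≥ r`. -/
def relSet (r n : ℕ) : Set ((Fin n → ℕ) →₀ K) :=
  { x | ∃ (a : Fin n → ℕ) (i : ℕ) (h : i + 1 < n), r ≤ a ⟨i, by omega⟩ ∧
      x = ∑ j ∈ Finset.range (r + 1),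
            ((-1 : K) ^ j * qbinom (r : ℤ) j) • Finsupp.single (tupleRepl a i h j) (1 : K) }

/-- The coefficient `A(k,s) = [s+k−r−1 ¦ s−1] · [k ¦ r−s]`. -/
def Acoef (r : ℕ) (k : ℤ) (s : ℕ) : K := qbinom ((s : ℤ) + k - (r : ℤ) - 1) (s - 1) * qbinom k (r - s)

lemma q_ne : q ≠ 0 := RatFunc.X_ne_zero

lemma q_pow_ne_one {n : ℕ} (hn : n ≠ 0) : q ^ n ≠ 1 := by
  unfold q
  intro h
  have hX : (RatFunc.X : K) = algebraMap (Polynomial ℚ) K Polynomial.X := (RatFunc.algebraMap_X).symm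
  rw [hX, ← map_pow, ← map_one (algebraMap (Polynomial ℚ) K)] at h
  have h2 := RatFunc.algebraMap_injective ℚ h
  have := congrArg Polynomial.natDegree h2
  simp [Polynomial.natDegree_X_pow] at this
  exact hn this

lemma qz (a b : ℤ) : q ^ a * q ^ b = q ^ (a + b) := (zpow_add₀ q_ne a b).symm

lemma q_zpow_ne {n : ℤ} (hn : n ≠ 0) : q ^ n ≠ q ^ (-n) := by
  intro h
  have h2 : q ^ n * q ^ n = q ^ (-n) * q ^ n := by rw [h]
  rw [qz, qz, neg_add_cancel, zpow_zero] at h2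
  rcases n.lt_or_lt_of_ne hn with hlt | hlt
  · obtain ⟨m, hm⟩ : ∃ m : ℕ, n + n = -(m : ℤ) ∧ True := ⟨(-(n+n)).toNat, by omega, trivial⟩
    rw [hm.1, zpow_neg] at h2
    have : q ^ (m : ℤ) = 1 := by
      field_simp at h2
      rw [div_eq_one_iff_eq (zpow_ne_zero _ q_ne), zpow_natCast] at h2
      rw [zpow_natCast]
      exact h2.symm
    rw [zpow_natCast] at this
    exact q_pow_ne_one (by omega) this
  · obtain ⟨m, hm⟩ : ∃ m : ℕ, n + n = (m : ℤ) ∧ True := ⟨(n+n).toNat, by omega, trivial⟩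
    rw [hm.1, zpow_natCast] at h2
    exact q_pow_ne_one (by omega) h2

lemma d_ne : q - q⁻¹ ≠ 0 := by
  have h := q_zpow_ne (n := 1) one_ne_zero
  intro hc
  apply h
  rw [zpow_one, zpow_neg, zpow_one]
  exact sub_eq_zero.mp hc

lemma qint_ne {n : ℤ} (hn : n ≠ 0) : qint n ≠ 0 :=
  div_ne_zero (sub_ne_zero.2 (q_zpow_ne hn)) d_ne

lemma qint_zero : qint 0 = 0 := by simp [qint]

lemma qint_neg (n : ℤ) : qint (-n) = - qint n := by
  rw [qint, qint, neg_neg, ← neg_div, neg_sub]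

lemma qfact_ne (m : ℕ) : qfact m ≠ 0 := by
  apply Finset.prod_ne_zero_iff.2
  intro t _
  exact qint_ne (by omega)

lemma qbinom_zero (n : ℤ) : qbinom n 0 = 1 := by simp [qbinom, qfact]

lemma qbinom_nat_eq_zero {n m : ℕ} (h : n < m) : qbinom (n : ℤ) m = 0 := by
  rw [qbinom, Finset.prod_eq_zero (Finset.mem_range.2 h) (by simp [qint_zero]), zero_div]

lemma qbinom_self (n : ℕ) : qbinom (n : ℤ) n = 1 := by
  rw [qbinom, div_eq_one_iff_eq (qfact_ne n), qfact]
  rw [← Finset.prod_range_reflect (fun t => qint (t + 1)) n]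
  apply Finset.prod_congr rfl
  intro t ht
  simp only [Finset.mem_range] at ht
  congr 1
  omega

lemma qbinom_neg_one (m : ℕ) : qbinom (-1) m = (-1 : K) ^ m := by
  rw [qbinom]
  have : ∏ t ∈ Finset.range m, qint (-1 - t) = ∏ t ∈ Finset.range m, (-1 : K) * qint (t + 1) := by
    apply Finset.prod_congr rfl
    intro t _
    rw [show (-1 - (t:ℤ)) = -((t:ℤ)+1) by ring, qint_neg, neg_one_mul]
  rw [this, Finset.prod_mul_distrib, Finset.prod_const, ← qfact,
    mul_div_assoc, div_self (qfact_ne m), mul_one, Finset.card_range]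

lemma pascal_num (r j : ℕ) :
    q ^ (-((j:ℤ)+1)) * qint ((r:ℤ) - j) + q ^ ((r:ℤ) - j) * qint ((j:ℤ)+1) = qint ((r:ℤ)+1) := by
  rw [qint, qint, qint, ← mul_div_assoc, ← mul_div_assoc, ← add_div]
  congr 1
  rw [mul_sub, mul_sub, qz, qz, qz, qz,
    show (-((j:ℤ)+1)) + ((r:ℤ) - j) = (r:ℤ) - (2*j+1) by ring,
    show (-((j:ℤ)+1)) + (-((r:ℤ) - j)) = -((r:ℤ)+1) by ring,
    show ((r:ℤ) - j) + ((j:ℤ)+1) = (r:ℤ)+1 by ring,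
    show ((r:ℤ) - j) + (-((j:ℤ)+1)) = (r:ℤ) - (2*j+1) by ring]
  ring

lemma qbinom_pascal (r j : ℕ) :
    qbinom ((r:ℤ)+1) (j+1) = q ^ (-((j:ℤ)+1)) * qbinom r (j+1) + q ^ ((r:ℤ) - j) * qbinom r j := by
  have hnum1 : ∏ t ∈ Finset.range (j+1), qint ((r:ℤ)+1 - t)
      = (∏ t ∈ Finset.range j, qint ((r:ℤ) - t)) * qint ((r:ℤ)+1) := by
    rw [Finset.prod_range_succ']
    congr 1
    exact Finset.prod_congr rfl (fun t _ => by congr 1; push_cast; ring)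
  have hnum2 : ∏ t ∈ Finset.range (j+1), qint ((r:ℤ) - t)
      = (∏ t ∈ Finset.range j, qint ((r:ℤ) - t)) * qint ((r:ℤ) - j) := Finset.prod_range_succ _ _
  have hfact : qfact (j+1) = qfact j * qint ((j:ℤ)+1) := Finset.prod_range_succ _ _
  have h1 := qfact_ne j
  have h2 : qint ((j:ℤ)+1) ≠ 0 := qint_ne (by omega)
  rw [qbinom, qbinom, qbinom, hnum1, hnum2, hfact, ← mul_div_assoc, ← mul_div_assoc,
    ← mul_div_mul_right (q ^ ((r:ℤ) - j) * (∏ t ∈ Finset.range j, qint ((r:ℤ) - t))) (qfact j) h2,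
    ← add_div]
  congr 1
  linear_combination (-(∏ t ∈ Finset.range j, qint ((r:ℤ) - t))) * pascal_num r j

lemma qbinom_top (r : ℕ) : qbinom (r:ℤ) (r+1) = 0 := by
  exact_mod_cast qbinom_nat_eq_zero (Nat.lt_succ_self r)

lemma qbt (r : ℕ) : ∀ z : K, ∑ j ∈ Finset.range (r+1), (-1:K)^j * qbinom (r:ℤ) j * z^j
    = ∏ i ∈ Finset.range r, (1 - q ^ ((r:ℤ) - 1 - 2*(i:ℤ)) * z) := by
  induction r with
  | zero => intro z; simp [qbinom_zero]
  | succ r ih =>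
    intro z
    have hqiz : ∀ n : ℕ, (q⁻¹ * z)^n = q^(-(n:ℤ)) * z^n := by
      intro n
      rw [mul_pow, inv_pow, ← zpow_natCast q n, ← zpow_neg]
    calc ∑ j ∈ Finset.range (r+1+1), (-1:K)^j * qbinom ((r+1:ℕ):ℤ) j * z^j
        = ∑ j ∈ Finset.range (r+1), (-1:K)^(j+1) * qbinom ((r:ℤ)+1) (j+1) * z^(j+1) + 1 := by
          rw [Finset.sum_range_succ']
          push_cast
          norm_num [qbinom_zero]
      _ = (∑ j ∈ Finset.range (r+1), (-1:K)^(j+1) * qbinom (r:ℤ) (j+1) * (q⁻¹*z)^(j+1) + 1)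
          + (-(q^(r:ℤ) * z)) * ∑ j ∈ Finset.range (r+1), (-1:K)^j * qbinom (r:ℤ) j * (q⁻¹*z)^j := by
          have hA : ∀ j ∈ Finset.range (r+1), (-1:K)^(j+1) * qbinom ((r:ℤ)+1) (j+1) * z^(j+1)
              = (-1:K)^(j+1) * qbinom (r:ℤ) (j+1) * (q⁻¹*z)^(j+1)
                + (-(q^(r:ℤ) * z)) * ((-1:K)^j * qbinom (r:ℤ) j * (q⁻¹*z)^j) := by
            intro j _
            rw [qbinom_pascal r j, hqiz (j+1), hqiz j,
              show q ^ ((r:ℤ) - j) = q ^ (r:ℤ) * q ^ (-(j:ℤ)) by rw [qz, ← sub_eq_add_neg]]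
            push_cast
            ring
          rw [Finset.sum_congr rfl hA, Finset.sum_add_distrib, ← Finset.mul_sum]
          ring
      _ = ∑ j ∈ Finset.range (r+1), (-1:K)^j * qbinom (r:ℤ) j * (q⁻¹*z)^j
          + (-(q^(r:ℤ)*z)) * ∑ j ∈ Finset.range (r+1), (-1:K)^j * qbinom (r:ℤ) j * (q⁻¹*z)^j := by
          congr 1
          have h3 := Finset.sum_range_succ' (fun j => (-1:K)^j * qbinom (r:ℤ) j * (q⁻¹*z)^j) (r+1)
          rw [Finset.sum_range_succ _ (r+1), qbinom_top] at h3
          simp only [mul_zero, zero_mul, add_zero, pow_zero, pow_zero, qbinom_zero, mul_one, one_mul] at h3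
          linear_combination -h3
      _ = (1 - q^(r:ℤ) * z) * ∏ i ∈ Finset.range r, (1 - q^((r:ℤ)-1-2*(i:ℤ)) * (q⁻¹ * z)) := by
          rw [ih (q⁻¹*z)]
          ring
      _ = ∏ i ∈ Finset.range (r+1), (1 - q ^ (((r+1:ℕ):ℤ) - 1 - 2*(i:ℤ)) * z) := by
          rw [Finset.prod_range_succ', mul_comm]
          congr 1
          · apply Finset.prod_congr rfl
            intro i _
            congr 1
            rw [show q⁻¹ = q ^ (-1:ℤ) by rw [zpow_neg, zpow_one], ← mul_assoc, qz]
            congr 2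
            push_cast
            ring
          · congr 1
            push_cast
            norm_num

lemma sumB (r m : ℕ) (hm : m < r) :
    ∑ j ∈ Finset.range (r+1), (-1:K)^j * qbinom (r:ℤ) j * (q ^ (2*(m:ℤ) - (r:ℤ) + 1))^j = 0 := by
  rw [qbt r (q ^ (2*(m:ℤ) - (r:ℤ) + 1))]
  apply Finset.prod_eq_zero (Finset.mem_range.2 hm)
  rw [qz, show ((r:ℤ) - 1 - 2*(m:ℤ)) + (2*(m:ℤ) - (r:ℤ) + 1) = 0 by ring, zpow_zero, sub_self]

def cfun (r s : ℕ) (t : ℕ) : ℤ := if t < s - 1 then (s:ℤ) - r - 1 - t else (s:ℤ) - 1 - t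

lemma Acoef_prod (r s : ℕ) (hs1 : 1 ≤ s) (hs2 : s ≤ r) (k : ℤ) :
    Acoef r k s * (qfact (s-1) * qfact (r-s)) = ∏ t ∈ Finset.range (r-1), qint (k + cfun r s t) := by
  rw [show r - 1 = (s-1) + (r-s) by omega, Finset.prod_range_add]
  have e1 : ∏ t ∈ Finset.range (s-1), qint (k + cfun r s t)
      = ∏ t ∈ Finset.range (s-1), qint ((s:ℤ) + k - r - 1 - t) := by
    apply Finset.prod_congr rfl
    intro t ht
    simp only [Finset.mem_range] at ht
    rw [cfun, if_pos ht]
    congr 1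
    ring
  have e2 : ∏ t ∈ Finset.range (r-s), qint (k + cfun r s ((s-1) + t))
      = ∏ t ∈ Finset.range (r-s), qint (k - t) := by
    apply Finset.prod_congr rfl
    intro t ht
    rw [cfun, if_neg (by omega)]
    congr 1
    push_cast [Nat.cast_sub hs1]
    ring
  rw [e1, e2, Acoef, qbinom, qbinom]
  have h1 := qfact_ne (s-1)
  have h2 := qfact_ne (r-s)
  field_simp

lemma pow_combine (a b j : ℕ) : (q ^ (-(j:ℤ)))^a * (q^((j:ℤ)))^b = (q ^ ((b:ℤ) - (a:ℤ)))^j := by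
  rw [← zpow_natCast (q ^ (-(j:ℤ))) a, ← zpow_natCast (q ^ ((j:ℤ))) b, ← zpow_mul, ← zpow_mul, qz,
    ← zpow_natCast (q ^ ((b:ℤ) - (a:ℤ))) j, ← zpow_mul]
  congr 1
  ring

lemma keyC (r s : ℕ) (hs1 : 1 ≤ s) (hs2 : s ≤ r) (k : ℤ) :
    ∑ j ∈ Finset.range (r+1), (-1:K)^j * qbinom (r:ℤ) j * Acoef r (k - j) s = 0 := by
  have hf : qfact (s-1) * qfact (r-s) ≠ 0 := mul_ne_zero (qfact_ne _) (qfact_ne _)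
  have hmain : (∑ j ∈ Finset.range (r+1), (-1:K)^j * qbinom (r:ℤ) j * Acoef r (k - j) s)
      * (qfact (s-1) * qfact (r-s)) = 0 := by
    rw [Finset.sum_mul]
    have hterm : ∀ j ∈ Finset.range (r+1),
        (-1:K)^j * qbinom (r:ℤ) j * Acoef r (k - j) s * (qfact (s-1) * qfact (r-s))
        = ((-1:K)^j * qbinom (r:ℤ) j) *
            ((∏ t ∈ Finset.range (r-1),
              (q^(k + cfun r s t) * q^(-(j:ℤ)) + (-(q^(-(k + cfun r s t)))) * q^((j:ℤ))))
             / (q - q⁻¹)^(r-1)) := by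
      intro j _
      rw [mul_assoc, Acoef_prod r s hs1 hs2 (k - j)]
      congr 1
      have hq : ∀ t : ℕ, qint (k - j + cfun r s t)
          = (q^(k + cfun r s t) * q^(-(j:ℤ)) + (-(q^(-(k + cfun r s t)))) * q^((j:ℤ))) / (q - q⁻¹) := by
        intro t
        rw [qint, show k - (j:ℤ) + cfun r s t = (k + cfun r s t) + (-(j:ℤ)) by ring,
          show -((k + cfun r s t) + (-(j:ℤ))) = (-(k + cfun r s t)) + (j:ℤ) by ring,
          ← qz (k + cfun r s t) (-(j:ℤ)), ← qz (-(k + cfun r s t)) ((j:ℤ))]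
        congr 1
        ring
      rw [Finset.prod_congr rfl (fun t _ => hq t), Finset.prod_div_distrib, Finset.prod_const,
        Finset.card_range]
    rw [Finset.sum_congr rfl hterm]
    have hexp : ∀ j ∈ Finset.range (r+1),
        ((-1:K)^j * qbinom (r:ℤ) j) *
            ((∏ t ∈ Finset.range (r-1),
              (q^(k + cfun r s t) * q^(-(j:ℤ)) + (-(q^(-(k + cfun r s t)))) * q^((j:ℤ))))
             / (q - q⁻¹)^(r-1))
        = (∑ S ∈ (Finset.range (r-1)).powerset,
            ((-1:K)^j * qbinom (r:ℤ) j) *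
              (((∏ t ∈ S, q^(k + cfun r s t)) * (q^(-(j:ℤ)))^(S.card)) *
               ((∏ t ∈ Finset.range (r-1) \ S, (-(q^(-(k + cfun r s t))))) * (q^((j:ℤ)))^((Finset.range (r-1) \ S).card))))
          / (q - q⁻¹)^(r-1) := by
      intro j _
      rw [Finset.prod_add]
      rw [← mul_div_assoc, Finset.mul_sum]
      congr 1
      apply Finset.sum_congr rfl
      intro S _
      rw [Finset.prod_mul_distrib, Finset.prod_mul_distrib, Finset.prod_const, Finset.prod_const]
    rw [Finset.sum_congr rfl hexp, ← Finset.sum_div, div_eq_zero_iff]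
    left
    rw [Finset.sum_comm]
    apply Finset.sum_eq_zero
    intro S hS
    have hSsub : S ⊆ Finset.range (r-1) := Finset.mem_powerset.mp hS
    have hcard : S.card ≤ r - 1 := by
      simpa using Finset.card_le_card hSsub
    have hb : (Finset.range (r-1) \ S).card = (r-1) - S.card := by
      rw [Finset.card_sdiff_of_subset hSsub, Finset.card_range]
    set a := S.card with ha
    set b := (Finset.range (r-1) \ S).card with hbdef
    have hterm2 : ∀ j ∈ Finset.range (r+1),
        ((-1:K)^j * qbinom (r:ℤ) j) *
          (((∏ t ∈ S, q^(k + cfun r s t)) * (q^(-(j:ℤ)))^a) *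
           ((∏ t ∈ Finset.range (r-1) \ S, (-(q^(-(k + cfun r s t))))) * (q^((j:ℤ)))^b))
        = ((∏ t ∈ S, q^(k + cfun r s t)) * (∏ t ∈ Finset.range (r-1) \ S, (-(q^(-(k + cfun r s t))))))
          * ((-1:K)^j * qbinom (r:ℤ) j * (q ^ (2*(b:ℤ) - (r:ℤ) + 1))^j) := by
      intro j _
      have hab : (q ^ (-(j:ℤ)))^a * (q^((j:ℤ)))^b = (q ^ (2*(b:ℤ) - (r:ℤ) + 1))^j := by
        rw [pow_combine a b j]
        congr 2
        omega
      linear_combination ((-1:K)^j * qbinom (r:ℤ) j *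
        (∏ t ∈ S, q^(k + cfun r s t)) * (∏ t ∈ Finset.range (r-1) \ S, (-(q^(-(k + cfun r s t)))))) * hab
    rw [Finset.sum_congr rfl hterm2, ← Finset.mul_sum]
    have hblt : b < r := by omega
    rw [sumB r b hblt, mul_zero]
  exact (mul_eq_zero.mp hmain).resolve_right hf

lemma sum_Icc_one {M : Type*} [AddCommMonoid M] (n : ℕ) (f : ℕ → M) :
    ∑ j ∈ Finset.Icc 1 n, f j = ∑ j ∈ Finset.range n, f (j+1) := by
  rw [← Finset.Ico_add_one_right_eq_Icc, Finset.sum_Ico_eq_sum_range]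
  exact Finset.sum_congr rfl (fun i _ => by rw [Nat.add_comm])

lemma repl_eq (k l j : ℕ) (h : (0:ℕ) + 1 < 2) : tupleRepl ![k, l] 0 h j = ![k - j, l + j] := by
  funext t
  fin_cases t <;>
    simp [tupleRepl, Matrix.cons_val_zero, Matrix.cons_val_one, Matrix.head_cons]

lemma main (r : ℕ) (hr : 2 ≤ r) : ∀ k l : ℕ,
    Finsupp.single (![k, l] : Fin 2 → ℕ) (1:K)
      - ∑ s ∈ Finset.Icc 1 r, ((-1:K)^(s-1) * Acoef r (k:ℤ) s) •
          Finsupp.single (![r - s, l + s + k - r] : Fin 2 → ℕ) (1:K)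
      ∈ Submodule.span K (relSet r 2) := by
  intro k
  induction k using Nat.strong_induction_on with
  | _ k ih =>
    intro l
    by_cases hk : k < r
    · have hsum : ∑ s ∈ Finset.Icc 1 r, ((-1:K)^(s-1) * Acoef r (k:ℤ) s) •
            Finsupp.single (![r - s, l + s + k - r] : Fin 2 → ℕ) (1:K)
          = Finsupp.single (![k, l] : Fin 2 → ℕ) (1:K) := by
        rw [Finset.sum_eq_single (r - k)]
        · have h1 : r - (r - k) = k := by omega
          have h2 : l + (r - k) + k - r = l := by omega
          rw [h1, h2]
          have hA : Acoef r (k:ℤ) (r - k) = (-1:K)^(r - k - 1) := by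
            rw [Acoef]
            have e1 : ((r - k : ℕ):ℤ) + (k:ℤ) - (r:ℤ) - 1 = -1 := by omega
            have e2 : r - (r - k) = k := by omega
            rw [e1, e2, qbinom_neg_one, qbinom_self, mul_one]
          rw [hA, ← pow_add, show (r-k-1) + (r-k-1) = 2*(r-k-1) by ring, pow_mul]
          norm_num
        · intro s hs hne
          simp only [Finset.mem_Icc] at hs
          rcases Nat.lt_or_ge s (r - k) with hlt | hge
          · have hz : qbinom (k:ℤ) (r - s) = 0 := qbinom_nat_eq_zero (by omega)
            rw [Acoef, hz, mul_zero, mul_zero, zero_smul]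
          · have hgt : r - k < s := by omega
            have e1 : ((s:ℤ) + (k:ℤ) - (r:ℤ) - 1) = ((s + k - r - 1 : ℕ) : ℤ) := by omega
            have hz : qbinom ((s:ℤ) + (k:ℤ) - (r:ℤ) - 1) (s - 1) = 0 := by
              rw [e1]
              exact qbinom_nat_eq_zero (by omega)
            rw [Acoef, hz, zero_mul, mul_zero, zero_smul]
        · intro hmem
          exact absurd (Finset.mem_Icc.2 ⟨by omega, by omega⟩) hmem
      rw [hsum, sub_self]
      exact zero_mem _
    · push_neg at hk
      have h01 : (0:ℕ) + 1 < 2 := by norm_num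
      have hrel : (∑ j ∈ Finset.range (r+1), ((-1:K)^j * qbinom (r:ℤ) j) •
            Finsupp.single (tupleRepl ![k,l] 0 h01 j) (1:K)) ∈ relSet r 2 := by
        refine ⟨![k,l], 0, h01, ?_, rfl⟩
        show r ≤ k
        exact hk
      have hrel' : ∑ j ∈ Finset.range (r+1), ((-1:K)^j * qbinom (r:ℤ) j) •
            Finsupp.single (tupleRepl ![k,l] 0 h01 j) (1:K)
          = ∑ j ∈ Finset.range (r+1), ((-1:K)^j * qbinom (r:ℤ) j) •
              Finsupp.single (![k-j, l+j] : Fin 2 → ℕ) (1:K) :=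
        Finset.sum_congr rfl (fun j _ => by rw [repl_eq])
      have hD : ∀ j ∈ Finset.Icc 1 r,
          (Finsupp.single (![k-j, l+j] : Fin 2 → ℕ) (1:K)
            - ∑ s ∈ Finset.Icc 1 r, ((-1:K)^(s-1) * Acoef r ((k:ℤ) - j) s) •
                Finsupp.single (![r-s, l+s+k-r] : Fin 2 → ℕ) (1:K))
          ∈ Submodule.span K (relSet r 2) := by
        intro j hj
        simp only [Finset.mem_Icc] at hj
        have h2 := ih (k - j) (by omega) (l + j)
        have htup : ∀ s ∈ Finset.Icc 1 r,
            ((-1:K)^(s-1) * Acoef r ((k - j : ℕ):ℤ) s) •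
              Finsupp.single (![r-s, (l+j)+s+(k-j)-r] : Fin 2 → ℕ) (1:K)
            = ((-1:K)^(s-1) * Acoef r ((k:ℤ) - j) s) •
                Finsupp.single (![r-s, l+s+k-r] : Fin 2 → ℕ) (1:K) := by
          intro s hs
          rw [show ((k - j : ℕ):ℤ) = (k:ℤ) - j by omega,
            show (l+j)+s+(k-j)-r = l+s+k-r by omega]
        rw [Finset.sum_congr rfl htup] at h2
        exact h2
      have hscal : ∀ s ∈ Finset.Icc 1 r,
          ∑ j ∈ Finset.Icc 1 r, ((-1:K)^j * qbinom (r:ℤ) j) * ((-1:K)^(s-1) * Acoef r ((k:ℤ) - j) s)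
          = -((-1:K)^(s-1) * Acoef r (k:ℤ) s) := by
        intro s hs
        simp only [Finset.mem_Icc] at hs
        have h0 := keyC r s hs.1 hs.2 (k:ℤ)
        rw [Finset.sum_range_succ'] at h0
        simp only [pow_zero, one_mul, qbinom_zero, Nat.cast_zero, sub_zero, mul_one] at h0
        rw [sum_Icc_one r (fun j => ((-1:K)^j * qbinom (r:ℤ) j) * ((-1:K)^(s-1) * Acoef r ((k:ℤ) - j) s))]
        have hre : ∑ j ∈ Finset.range r, ((-1:K)^(j+1) * qbinom (r:ℤ) (j+1)) * ((-1:K)^(s-1) * Acoef r ((k:ℤ) - (j+1:ℕ)) s)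
            = (-1:K)^(s-1) * ∑ j ∈ Finset.range r, (-1:K)^(j+1) * qbinom (r:ℤ) (j+1) * Acoef r ((k:ℤ) - ((j:ℕ)+1:ℕ)) s := by
          rw [Finset.mul_sum]
          exact Finset.sum_congr rfl (fun j _ => by ring)
        rw [hre]
        linear_combination ((-1:K)^(s-1)) * h0
      -- the key algebraic identity
      have key : Finsupp.single (![k, l] : Fin 2 → ℕ) (1:K)
            - ∑ s ∈ Finset.Icc 1 r, ((-1:K)^(s-1) * Acoef r (k:ℤ) s) •
                Finsupp.single (![r - s, l + s + k - r] : Fin 2 → ℕ) (1:K)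
          = (∑ j ∈ Finset.range (r+1), ((-1:K)^j * qbinom (r:ℤ) j) •
                Finsupp.single (tupleRepl ![k,l] 0 h01 j) (1:K))
            + ∑ j ∈ Finset.Icc 1 r, (-((-1:K)^j * qbinom (r:ℤ) j)) •
                (Finsupp.single (![k-j, l+j] : Fin 2 → ℕ) (1:K)
                  - ∑ s ∈ Finset.Icc 1 r, ((-1:K)^(s-1) * Acoef r ((k:ℤ) - j) s) •
                      Finsupp.single (![r-s, l+s+k-r] : Fin 2 → ℕ) (1:K)) := by
        rw [hrel']
        have expand : ∑ j ∈ Finset.Icc 1 r, (-((-1:K)^j * qbinom (r:ℤ) j)) •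
                (Finsupp.single (![k-j, l+j] : Fin 2 → ℕ) (1:K)
                  - ∑ s ∈ Finset.Icc 1 r, ((-1:K)^(s-1) * Acoef r ((k:ℤ) - j) s) •
                      Finsupp.single (![r-s, l+s+k-r] : Fin 2 → ℕ) (1:K))
            = (∑ j ∈ Finset.Icc 1 r, ((-1:K)^j * qbinom (r:ℤ) j) •
                  ∑ s ∈ Finset.Icc 1 r, ((-1:K)^(s-1) * Acoef r ((k:ℤ) - j) s) •
                    Finsupp.single (![r-s, l+s+k-r] : Fin 2 → ℕ) (1:K))
              - ∑ j ∈ Finset.Icc 1 r, ((-1:K)^j * qbinom (r:ℤ) j) •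
                  Finsupp.single (![k-j, l+j] : Fin 2 → ℕ) (1:K) := by
          rw [← Finset.sum_sub_distrib]
          exact Finset.sum_congr rfl (fun j _ => by rw [neg_smul, smul_sub, neg_sub])
        have swap : ∑ j ∈ Finset.Icc 1 r, ((-1:K)^j * qbinom (r:ℤ) j) •
                  ∑ s ∈ Finset.Icc 1 r, ((-1:K)^(s-1) * Acoef r ((k:ℤ) - j) s) •
                    Finsupp.single (![r-s, l+s+k-r] : Fin 2 → ℕ) (1:K)
            = ∑ s ∈ Finset.Icc 1 r,
                (∑ j ∈ Finset.Icc 1 r, ((-1:K)^j * qbinom (r:ℤ) j) * ((-1:K)^(s-1) * Acoef r ((k:ℤ) - j) s)) •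
                  Finsupp.single (![r-s, l+s+k-r] : Fin 2 → ℕ) (1:K) := by
          simp only [Finset.smul_sum, smul_smul]
          rw [Finset.sum_comm]
          simp only [← Finset.sum_smul]
        have split : ∑ j ∈ Finset.range (r+1), ((-1:K)^j * qbinom (r:ℤ) j) •
                Finsupp.single (![k-j, l+j] : Fin 2 → ℕ) (1:K)
            = Finsupp.single (![k, l] : Fin 2 → ℕ) (1:K)
              + ∑ j ∈ Finset.Icc 1 r, ((-1:K)^j * qbinom (r:ℤ) j) •
                  Finsupp.single (![k-j, l+j] : Fin 2 → ℕ) (1:K) := by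
          rw [Finset.sum_range_succ',
            sum_Icc_one r (fun j => ((-1:K)^j * qbinom (r:ℤ) j) • Finsupp.single (![k-j, l+j] : Fin 2 → ℕ) (1:K))]
          rw [show ((-1:K)^0 * qbinom (r:ℤ) 0) • Finsupp.single (![k-0, l+0] : Fin 2 → ℕ) (1:K)
              = Finsupp.single (![k, l] : Fin 2 → ℕ) (1:K) by simp [qbinom_zero]]
          exact add_comm _ _
        have hscal' : ∀ s ∈ Finset.Icc 1 r,
            (∑ j ∈ Finset.Icc 1 r, ((-1:K)^j * qbinom (r:ℤ) j) * ((-1:K)^(s-1) * Acoef r ((k:ℤ) - j) s)) •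
                Finsupp.single (![r-s, l+s+k-r] : Fin 2 → ℕ) (1:K)
            = (-((-1:K)^(s-1) * Acoef r (k:ℤ) s)) •
                Finsupp.single (![r-s, l+s+k-r] : Fin 2 → ℕ) (1:K) :=
          fun s hs => by rw [hscal s hs]
        rw [expand, swap, split, Finset.sum_congr rfl hscal']
        simp only [neg_smul, Finset.sum_neg_distrib]
        abel
      rw [key]
      exact Submodule.add_mem _ (Submodule.subset_span hrel)
        (Submodule.sum_mem _ (fun j hj => Submodule.smul_mem _ _ (hD j hj)))

/-- n = 2: for every `k ≥ 0` and `ℓ ∈ ℕ`,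
`(k, ℓ) = Σ_{s=max(1,r−k)}^{r} (−1)^{s−1} A(k,s) (r−s, ℓ+s+k−r)` holds in `V_2`. -/
theorem stmt9 (r : ℕ) (hr : 2 ≤ r) (k l : ℕ) :
    Finsupp.single (![k, l] : Fin 2 → ℕ) (1 : K)
      - ∑ s ∈ Finset.Icc (max 1 (r - k)) r,
          ((-1 : K) ^ (s - 1) * Acoef r (k : ℤ) s) •
            Finsupp.single (![r - s, l + s + k - r] : Fin 2 → ℕ) (1 : K)
      ∈ Submodule.span K (relSet r 2) := by
  
  have h := main r hr k l
  rcases Nat.lt_or_ge k r with hk | hk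
  · have hmax : max 1 (r - k) = r - k := by omega
    rw [hmax]
    have hs : ∑ s ∈ Finset.Icc (r - k) r, ((-1 : K) ^ (s - 1) * Acoef r (k : ℤ) s) •
            Finsupp.single (![r - s, l + s + k - r] : Fin 2 → ℕ) (1 : K)
        = ∑ s ∈ Finset.Icc 1 r, ((-1 : K) ^ (s - 1) * Acoef r (k : ℤ) s) •
            Finsupp.single (![r - s, l + s + k - r] : Fin 2 → ℕ) (1 : K) := by
      apply Finset.sum_subset (Finset.Icc_subset_Icc (by omega) le_rfl)
      intro s hsmem hnot
      simp only [Finset.mem_Icc] at hsmem hnot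
      have hz : qbinom (k:ℤ) (r - s) = 0 := qbinom_nat_eq_zero (by omega)
      rw [Acoef, hz, mul_zero, mul_zero, zero_smul]
    rw [hs]
    exact h
  · have h0 : r - k = 0 := by omega
    rw [h0]
    simpa using h
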